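/- The function Ψ(η) = 2e^{-η²/4} / (√π (γ - erf(η/2))), with constant γ > 1, satisfies the Riccati equation Ψ² - ηΨ = 2Ψ' for all real η. -/

import Mathlib

noncomputable def myErf (x : ℝ) : ℝ :=
  (2 / Real.sqrt Real.pi) * ∫ s in (0:ℝ)..x, Real.exp (-s ^ 2)

open MeasureTheory intervalIntegral Real in
lemma myErf_le_one (x : ℝ) : myErf x ≤ 1 := by
  have hπ : (0:ℝ) < Real.sqrt Real.pi := Real.sqrt_pos.mpr Real.pi_pos
  have hint : Integrable (fun s : ℝ => Real.exp (-s ^ 2)) := by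
    simpa using integrable_exp_neg_mul_sq (one_pos)
  have hIoi : ∫ s in Set.Ioi (0:ℝ), Real.exp (-s ^ 2) = Real.sqrt Real.pi / 2 := by
    simpa using integral_gaussian_Ioi 1
  have hle : (∫ s in (0:ℝ)..x, Real.exp (-s ^ 2)) ≤ Real.sqrt Real.pi / 2 := by
    rcases le_or_gt x 0 with hx | hx
    · have h1 : (∫ s in (0:ℝ)..x, Real.exp (-s ^ 2)) ≤ 0 := by
        rw [intervalIntegral.integral_symm]
        have : 0 ≤ ∫ s in x..(0:ℝ), Real.exp (-s ^ 2) :=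
          intervalIntegral.integral_nonneg hx (fun s _ => (Real.exp_pos _).le)
        linarith
      linarith [Real.sqrt_nonneg Real.pi]
    · rw [intervalIntegral.integral_of_le hx.le, ← hIoi]
      apply setIntegral_mono_set hint.integrableOn
        (Filter.Eventually.of_forall fun s => (Real.exp_pos _).le)
      exact Filter.Eventually.of_forall fun s hs => Set.mem_Ioi.mp (Set.mem_Ioc.mp hs).1
  have : myErf x ≤ (2 / Real.sqrt Real.pi) * (Real.sqrt Real.pi / 2) := by
    unfold myErf
    exact mul_le_mul_of_nonneg_left hle (by positivity)
  calc myErf x ≤ (2 / Real.sqrt Real.pi) * (Real.sqrt Real.pi / 2) := this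
    _ = 1 := by field_simp

lemma hasDerivAt_myErf (x : ℝ) :
    HasDerivAt myErf ((2 / Real.sqrt Real.pi) * Real.exp (-x ^ 2)) x := by
  have hint : MeasureTheory.Integrable (fun s : ℝ => Real.exp (-s ^ 2)) := by
    simpa using integrable_exp_neg_mul_sq (one_pos)
  have hcont : Continuous fun s : ℝ => Real.exp (-s ^ 2) := by continuity
  have h := intervalIntegral.integral_hasDerivAt_right (f := fun s : ℝ => Real.exp (-s ^ 2))
    (a := 0) (b := x) hint.intervalIntegrable
    (hcont.stronglyMeasurable.stronglyMeasurableAtFilter) hcont.continuousAt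
  rw [show myErf = fun y => (2 / Real.sqrt Real.pi) * ∫ s in (0:ℝ)..y, Real.exp (-s ^ 2) from rfl]
  simpa [myErf] using h.const_mul (2 / Real.sqrt Real.pi)

/-- The similarity profile `Ψ(η) = 2e^{-η²/4}/(√π (γ - erf(η/2)))`, `γ > 1`, satisfies
the Riccati equation `Ψ² - ηΨ = 2Ψ'` on ℝ. -/
theorem stmt2 (γ : ℝ) (hγ : 1 < γ) (Ψ : ℝ → ℝ)
    (hΨ : ∀ η : ℝ, Ψ η =
      2 * Real.exp (-η ^ 2 / 4) / (Real.sqrt Real.pi * (γ - myErf (η / 2)))) :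
    ∀ η : ℝ, HasDerivAt Ψ ((Ψ η ^ 2 - η * Ψ η) / 2) η := by
  intro η
  have hπ : (0:ℝ) < Real.sqrt Real.pi := Real.sqrt_pos.mpr Real.pi_pos
  have hpos : ∀ t : ℝ, 0 < γ - myErf t := fun t => by
    have := myErf_le_one t; linarith
  have hden : ∀ t : ℝ, Real.sqrt Real.pi * (γ - myErf t) ≠ 0 := fun t =>
    ne_of_gt (mul_pos hπ (hpos t))
  have hfun : Ψ = fun η => 2 * Real.exp (-η ^ 2 / 4) /
      (Real.sqrt Real.pi * (γ - myErf (η / 2))) := funext hΨ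
  -- derivative of numerator
  have hnum : HasDerivAt (fun η : ℝ => 2 * Real.exp (-η ^ 2 / 4))
      (2 * (Real.exp (-η ^ 2 / 4) * (-η / 2))) η := by
    have h1 : HasDerivAt (fun η : ℝ => -η ^ 2 / 4) (-η / 2) η := by
      have : HasDerivAt (fun x : ℝ => -x ^ 2 / 4) (-(↑2 * η ^ (2 - 1) * 1) / 4) η := ((hasDerivAt_id η).pow 2).neg.div_const 4
      convert this using 1; simp [id]; ring
    exact (h1.exp).const_mul 2
  -- derivative of denominator
  have hd2 : HasDerivAt (fun η : ℝ => η / 2) (1 / 2) η := by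
    simpa using (hasDerivAt_id η).div_const 2
  have herf : HasDerivAt (fun η : ℝ => myErf (η / 2))
      ((2 / Real.sqrt Real.pi) * Real.exp (-(η / 2) ^ 2) * (1 / 2)) η :=
    (hasDerivAt_myErf (η / 2)).comp (h₂ := myErf) η hd2
  have hden' : HasDerivAt (fun η : ℝ => Real.sqrt Real.pi * (γ - myErf (η / 2)))
      (Real.sqrt Real.pi * (0 - (2 / Real.sqrt Real.pi) * Real.exp (-(η / 2) ^ 2) * (1 / 2))) η :=
    ((hasDerivAt_const η γ).sub herf).const_mul (Real.sqrt Real.pi)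
  have hdiv := hnum.div hden' (hden (η / 2))
  rw [hfun]
  refine hdiv.congr_deriv ?_
  have he : Real.exp (-(η / 2) ^ 2) = Real.exp (-η ^ 2 / 4) := by ring_nf
  simp only [he]
  have h1 := hden (η / 2)
  field_simp
  ring
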